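/- Suppose the weights w : Fin n → ℝ are sorted in nondecreasing order. Let ε > 0, let w₀ ∈ (0, 1], and let A = {i : w i < w₀} be the set of all items of weight strictly less than w₀. Suppose that every item of A has weight at most ε, that |A| ≥ m/ε, and that there is a packing p of A into m unit-capacity bins in which every bin has load strictly greater than 1 − w₀. Then every set T ⊆ Fin n that is packable into m unit-capacity bins satisfies |T| ≤ (1 + ε)·|A|. (This is the combinatorial content of the lemma that First Fit Increasing achieves a 1 + ε approximation ratio whenever it terminates having filled all bins using only items of weight at most ε.) -/

import Mathlib

/-- `T` is packable into `m` unit-capacity bins under weights `w`. -/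
def Packable {n : ℕ} (w : Fin n → ℝ) (m : ℕ) (T : Finset (Fin n)) : Prop :=
  ∃ p : Fin n → Fin m, ∀ j : Fin m, ∑ i ∈ T.filter (fun i => p i = j), w i ≤ 1

theorem ffi_small_items_approx
    (n m : ℕ) (hm : 1 ≤ m) (w : Fin n → ℝ)
    (hw : ∀ i, 0 < w i ∧ w i ≤ 1) (hmono : Monotone w)
    (ε : ℝ) (hε : 0 < ε)
    (w₀ : ℝ) (hw₀0 : 0 < w₀) (hw₀1 : w₀ ≤ 1)
    (A : Finset (Fin n)) (hA : A = Finset.univ.filter (fun i => w i < w₀))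
    (hsmall : ∀ i ∈ A, w i ≤ ε)
    (hbig : (m : ℝ) / ε ≤ A.card)
    (p : Fin n → Fin m)
    (hp : ∀ j : Fin m, ∑ i ∈ A.filter (fun i => p i = j), w i ≤ 1)
    (hfull : ∀ j : Fin m, 1 - w₀ < ∑ i ∈ A.filter (fun i => p i = j), w i)
    (T : Finset (Fin n)) (hT : Packable w m T) :
    (T.card : ℝ) ≤ (1 + ε) * A.card := by
  obtain ⟨q, hq⟩ := hT
  -- total weight of T is at most m
  have hTfib : ∑ j : Fin m, ∑ i ∈ T.filter (fun i => q i = j), w i = ∑ i ∈ T, w i :=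
    Finset.sum_fiberwise_of_maps_to (fun i _ => Finset.mem_univ (q i)) w
  have hwT : ∑ i ∈ T, w i ≤ (m : ℝ) := by
    calc ∑ i ∈ T, w i = ∑ j : Fin m, ∑ i ∈ T.filter (fun i => q i = j), w i := hTfib.symm
    _ ≤ ∑ j : Fin m, (1 : ℝ) := Finset.sum_le_sum fun j _ => hq j
    _ = (m : ℝ) := by simp
  -- total weight of A is more than m * (1 - w₀)
  have hAfib : ∑ j : Fin m, ∑ i ∈ A.filter (fun i => p i = j), w i = ∑ i ∈ A, w i :=
    Finset.sum_fiberwise_of_maps_to (fun i _ => Finset.mem_univ (p i)) w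
  have hwA : (m : ℝ) * (1 - w₀) < ∑ i ∈ A, w i := by
    have hne : (Finset.univ : Finset (Fin m)).Nonempty := by
      have : 0 < m := hm
      simpa [Finset.univ_nonempty_iff] using Fin.pos_iff_nonempty.mp this
    calc (m : ℝ) * (1 - w₀) = ∑ _j : Fin m, (1 - w₀) := by simp [mul_comm]; ring
    _ < ∑ j : Fin m, ∑ i ∈ A.filter (fun i => p i = j), w i :=
        Finset.sum_lt_sum_of_nonempty hne fun j _ => hfull j
    _ = ∑ i ∈ A, w i := hAfib
  -- items in A weigh < w₀, items outside A weigh ≥ w₀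
  have hAsmall : ∀ i ∈ A, w i < w₀ := by
    intro i hi; rw [hA] at hi; exact (Finset.mem_filter.mp hi).2
  have hbigout : ∀ i, i ∉ A → w₀ ≤ w i := by
    intro i hi
    by_contra h
    exact hi (hA ▸ Finset.mem_filter.mpr ⟨Finset.mem_univ i, lt_of_not_ge h⟩)
  -- splitting sums
  have hTsplit : ∑ i ∈ T ∩ A, w i + ∑ i ∈ T \ A, w i = ∑ i ∈ T, w i :=
    Finset.sum_inter_add_sum_sdiff T A w
  have hAsplit : ∑ i ∈ A ∩ T, w i + ∑ i ∈ A \ T, w i = ∑ i ∈ A, w i :=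
    Finset.sum_inter_add_sum_sdiff A T w
  have hcomm : ∑ i ∈ T ∩ A, w i = ∑ i ∈ A ∩ T, w i := by rw [Finset.inter_comm]
  -- bound the two difference sums
  have hATle : ∑ i ∈ A \ T, w i ≤ w₀ * ((A \ T).card : ℝ) := by
    calc ∑ i ∈ A \ T, w i ≤ ∑ _i ∈ A \ T, w₀ :=
          Finset.sum_le_sum fun i hi => (hAsmall i (Finset.mem_sdiff.mp hi).1).le
    _ = w₀ * ((A \ T).card : ℝ) := by rw [Finset.sum_const, nsmul_eq_mul, mul_comm]
  have hTAge : w₀ * (((T \ A).card : ℝ)) ≤ ∑ i ∈ T \ A, w i := by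
    calc w₀ * ((T \ A).card : ℝ) = ∑ _i ∈ T \ A, w₀ := by
          rw [Finset.sum_const, nsmul_eq_mul, mul_comm]
    _ ≤ ∑ i ∈ T \ A, w i :=
          Finset.sum_le_sum fun i hi => hbigout i (Finset.mem_sdiff.mp hi).2
  -- cardinality relations
  have hTcard : (T.card : ℝ) = ((T ∩ A).card : ℝ) + ((T \ A).card : ℝ) := by
    rw [← Nat.cast_add, Finset.card_inter_add_card_sdiff]
  have hAcard : (A.card : ℝ) = ((A ∩ T).card : ℝ) + ((A \ T).card : ℝ) := by
    rw [← Nat.cast_add, Finset.card_inter_add_card_sdiff]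
  have hintercard : ((T ∩ A).card : ℝ) = ((A ∩ T).card : ℝ) := by
    rw [Finset.inter_comm]
  -- key inequality: |T\A| - |A\T| < m
  have hkey : ((T \ A).card : ℝ) - ((A \ T).card : ℝ) < m := by
    have h1 : w₀ * (((T \ A).card : ℝ) - ((A \ T).card : ℝ)) < (m : ℝ) * w₀ := by
      nlinarith [hTAge, hATle, hwT, hwA, hTsplit, hAsplit, hcomm]
    nlinarith [h1, hw₀0]
  have hmε : (m : ℝ) ≤ ε * A.card := by
    rwa [div_le_iff₀ hε, mul_comm] at hbig
  nlinarith [hkey, hmε, hTcard, hAcard, hintercard]
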